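/- arXiv:2406.03269 — 4 statements merged into one kernel-verified Lean document; each statement's English description precedes it below -/
import Mathlib

section
/- Let V be a real n×n matrix all of whose eigenvalues have positive real part (so that e^{-tV} decays). Then for row vector α and column vector β, the integral ∫₀^∞ α e^{-τV} β dτ equals α V⁻¹ β. -/
open Matrix NormedSpace

namespace R0Aux

attribute [local instance] Matrix.linftyOpNormedAddCommGroup Matrix.linftyOpNormedRing
  Matrix.linftyOpNormedAlgebra Matrix.linftyOpNormedSpace

variable {n : ℕ}

/-- eigenvector of powers -/
lemma pow_mulVec_eigen (A : Matrix (Fin n) (Fin n) ℂ) (v : Fin n → ℂ) (μ : ℂ)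
    (hv : A.mulVec v = μ • v) : ∀ k : ℕ, (A ^ k).mulVec v = μ ^ k • v := by
  intro k
  induction k with
  | zero => simp
  | succ k ih =>
    rw [pow_succ, ← Matrix.mulVec_mulVec, hv, Matrix.mulVec_smul, ih, pow_succ, smul_smul,
      mul_comm μ (μ ^ k)]

/-- eigenvector of exp -/
lemma exp_mulVec_eigen (A : Matrix (Fin n) (Fin n) ℂ) (v : Fin n → ℂ) (μ : ℂ)
    (hv : A.mulVec v = μ • v) :
    (exp A).mulVec v = Complex.exp μ • v := by
  classical
  let T : Matrix (Fin n) (Fin n) ℂ →ₗ[ℂ] (Fin n → ℂ) :=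
    { toFun := fun M => M.mulVec v
      map_add' := fun M N => Matrix.add_mulVec M N v
      map_smul' := fun c M => Matrix.smul_mulVec c M v }
  let Tc : Matrix (Fin n) (Fin n) ℂ →L[ℂ] (Fin n → ℂ) := LinearMap.toContinuousLinearMap T
  have h1 : (exp A).mulVec v = Tc (exp A) := rfl
  rw [h1, exp_eq_tsum ℂ]
  rw [Tc.map_tsum (expSeries_summable' (𝕂 := ℂ) A)]
  have h2 : ∀ k : ℕ, Tc ((k.factorial⁻¹ : ℂ) • A ^ k) = ((k.factorial⁻¹ : ℂ) * μ ^ k) • v := by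
    intro k
    have : Tc (A ^ k) = μ ^ k • v := pow_mulVec_eigen A v μ hv k
    rw [_root_.map_smul, this, smul_smul]
  simp_rw [h2]
  rw [Summable.tsum_smul_const]
  · congr 1
    rw [Complex.exp_eq_exp_ℂ, exp_eq_tsum ℂ]
    exact tsum_congr fun k => (smul_eq_mul ..).symm
  · simpa only [smul_eq_mul] using expSeries_summable' (𝕂 := ℂ) μ

/-- spectral mapping (the needed direction) for exp on complex matrices -/
lemma spectrum_exp_subset (A : Matrix (Fin n) (Fin n) ℂ) {lam : ℂ}
    (hlam : lam ∈ spectrum ℂ (exp A)) :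
    ∃ μ ∈ spectrum ℂ A, lam = Complex.exp μ := by
  classical
  rw [spectrum.mem_iff] at hlam
  have hdet : (algebraMap ℂ (Matrix (Fin n) (Fin n) ℂ) lam - exp A).det = 0 := by
    by_contra h
    exact hlam ((Matrix.isUnit_iff_isUnit_det _).mpr (isUnit_iff_ne_zero.mpr h))
  obtain ⟨v, hv0, hv⟩ := Matrix.exists_mulVec_eq_zero_iff.mpr hdet
  have hveig : (exp A).mulVec v = lam • v := by
    rw [Matrix.sub_mulVec, Algebra.algebraMap_eq_smul_one, Matrix.smul_mulVec,
      Matrix.one_mulVec, sub_eq_zero] at hv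
    exact hv.symm
  set E := Module.End.eigenspace (Matrix.mulVecLin (exp A)) lam with hE
  have hvE : v ∈ E := by
    rw [hE, Module.End.mem_eigenspace_iff, Matrix.mulVecLin_apply]
    exact hveig
  have : Nontrivial E := nontrivial_of_ne ⟨v, hvE⟩ 0 (by simp [Subtype.ext_iff, hv0])
  have hcomm : exp A * A = A * exp A := ((Commute.refl A).exp_left).eq
  have hstab : ∀ x ∈ E, (Matrix.mulVecLin A) x ∈ E := by
    intro x hx
    rw [hE, Module.End.mem_eigenspace_iff] at hx ⊢
    simp only [Matrix.mulVecLin_apply] at hx ⊢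
    rw [Matrix.mulVec_mulVec, hcomm, ← Matrix.mulVec_mulVec, hx, Matrix.mulVec_smul]
  set g : E →ₗ[ℂ] E := (Matrix.mulVecLin A).restrict hstab with hg
  obtain ⟨μ, hμ⟩ := Module.End.exists_eigenvalue g
  obtain ⟨w, hwE, hw0⟩ := hμ.exists_hasEigenvector
  have hweq : g w = μ • w := Module.End.mem_eigenspace_iff.mp hwE
  have hwv0 : (w : Fin n → ℂ) ≠ 0 := fun h => hw0 (Subtype.ext h)
  have hAw : A.mulVec (w : Fin n → ℂ) = μ • (w : Fin n → ℂ) := by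
    have := congrArg (Subtype.val) hweq
    simpa [hg, Matrix.mulVecLin_apply] using this
  refine ⟨μ, ?_, ?_⟩
  · rw [spectrum.mem_iff]
    intro hunit
    have hdet' : (algebraMap ℂ (Matrix (Fin n) (Fin n) ℂ) μ - A).det = 0 := by
      rw [← Matrix.exists_mulVec_eq_zero_iff]
      refine ⟨w, hwv0, ?_⟩
      rw [Matrix.sub_mulVec, Algebra.algebraMap_eq_smul_one, Matrix.smul_mulVec,
        Matrix.one_mulVec, hAw, sub_self]
    rw [Matrix.isUnit_iff_isUnit_det, hdet', isUnit_iff_ne_zero] at hunit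
    exact hunit rfl
  · have h1 : (exp A).mulVec w = Complex.exp μ • (w : Fin n → ℂ) :=
      exp_mulVec_eigen A w μ hAw
    have h2 : (exp A).mulVec w = lam • (w : Fin n → ℂ) := by
      have := Module.End.mem_eigenspace_iff.mp (w.2 : (w : Fin n → ℂ) ∈ E)
      simpa [Matrix.mulVecLin_apply] using this
    have h3 : (lam - Complex.exp μ) • (w : Fin n → ℂ) = 0 := by
      rw [sub_smul, ← h1, ← h2, sub_self]
    rcases smul_eq_zero.mp h3 with h | h
    · exact sub_eq_zero.mp h
    · exact absurd h hwv0

/-- decay bound, complex side -/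
lemma exists_norm_exp_decay (A : Matrix (Fin n) (Fin n) ℂ)
    (heig : ∀ μ ∈ spectrum ℂ A, 0 < μ.re) :
    ∃ C > 0, ∃ ε > 0, ∀ t : ℝ, 0 ≤ t →
      ‖exp (-(t • A))‖ ≤ C * Real.exp (-(ε * t)) := by
  classical
  obtain ⟨ε, hε, hlb⟩ : ∃ ε > 0, ∀ μ ∈ spectrum ℂ A, ε ≤ μ.re := by
    rcases Set.eq_empty_or_nonempty (spectrum ℂ A) with hS | hS
    · exact ⟨1, one_pos, by simp [hS]⟩
    · obtain ⟨μ₀, hμ₀, hmin⟩ := (spectrum.isCompact A).exists_isMinOn hS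
        Complex.continuous_re.continuousOn
      exact ⟨μ₀.re, heig μ₀ hμ₀, fun μ hμ => hmin hμ⟩
  set x := exp (-A) with hx
  have hsr : spectralRadius ℂ x ≤ ENNReal.ofReal (Real.exp (-ε)) := by
    rw [spectralRadius]
    refine iSup₂_le fun lam hlam => ?_
    obtain ⟨ν, hν, rfl⟩ := spectrum_exp_subset (-A) hlam
    rw [← spectrum.neg_eq] at hν
    have hν' : -ν ∈ spectrum ℂ A := Set.mem_neg.mp hν
    have hre : ν.re ≤ -ε := by
      have := hlb (-ν) hν'
      simp only [Complex.neg_re] at this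
      linarith
    have hnorm : ‖Complex.exp ν‖ ≤ Real.exp (-ε) := by
      rw [Complex.norm_exp]
      exact Real.exp_le_exp.mpr hre
    rw [← enorm_eq_nnnorm, ← ofReal_norm]
    exact ENNReal.ofReal_le_ofReal hnorm
  set ρ := Real.exp (-(ε / 2)) with hρdef
  have hρ0 : 0 < ρ := Real.exp_pos _
  have hρ1 : ρ < 1 := by
    rw [hρdef, Real.exp_lt_one_iff]
    linarith
  have hlt : spectralRadius ℂ x < ENNReal.ofReal ρ := by
    refine lt_of_le_of_lt hsr ?_
    rw [ENNReal.ofReal_lt_ofReal_iff hρ0]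
    exact Real.exp_lt_exp.mpr (by linarith)
  have hgel := spectrum.pow_nnnorm_pow_one_div_tendsto_nhds_spectralRadius x
  have hev : ∀ᶠ k : ℕ in Filter.atTop,
      (‖x ^ k‖₊ : ENNReal) ^ (1 / (k : ℝ)) < ENNReal.ofReal ρ :=
    hgel.eventually_lt_const hlt
  obtain ⟨K₀, hK₀⟩ := Filter.eventually_atTop.mp hev
  set K : ℕ := max K₀ 1 with hK
  have hpow : ∀ k : ℕ, K ≤ k → ‖x ^ k‖ ≤ ρ ^ k := by
    intro k hk
    have hk1 : 1 ≤ k := le_trans (le_max_right _ _) hk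
    have hk0 : (k : ℝ) ≠ 0 := Nat.cast_ne_zero.mpr (by omega)
    have h1 := hK₀ k (le_trans (le_max_left _ _) hk)
    have h2 : (‖x ^ k‖₊ : ENNReal) ≤ ENNReal.ofReal (ρ ^ k) := by
      have heq : ((‖x ^ k‖₊ : ENNReal) ^ (1 / (k : ℝ))) ^ (k : ℝ) = (‖x ^ k‖₊ : ENNReal) := by
        rw [← ENNReal.rpow_mul, one_div, inv_mul_cancel₀ hk0, ENNReal.rpow_one]
      calc (‖x ^ k‖₊ : ENNReal) = ((‖x ^ k‖₊ : ENNReal) ^ (1 / (k : ℝ))) ^ (k : ℝ) := heq.symm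
        _ ≤ (ENNReal.ofReal ρ) ^ (k : ℝ) := ENNReal.rpow_le_rpow h1.le (Nat.cast_nonneg k)
        _ = ENNReal.ofReal (ρ ^ (k : ℝ)) := ENNReal.ofReal_rpow_of_pos hρ0
        _ = ENNReal.ofReal (ρ ^ k) := by rw [Real.rpow_natCast]
    rw [← enorm_eq_nnnorm, ← ofReal_norm] at h2
    exact (ENNReal.ofReal_le_ofReal_iff (pow_nonneg hρ0.le k)).mp h2
  have hcont : Continuous fun s : ℝ => exp (-(s • A)) :=
    exp_continuous.comp (continuous_id.smul continuous_const).neg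
  obtain ⟨M1, hM1⟩ := (isCompact_Icc (a := (0:ℝ)) (b := 1)).exists_bound_of_continuousOn
    hcont.continuousOn
  obtain ⟨M2, hM2⟩ := (isCompact_Icc (a := (0:ℝ)) (b := (K:ℝ))).exists_bound_of_continuousOn
    hcont.continuousOn
  have hM1_0 : 0 ≤ M1 := le_trans (norm_nonneg _) (hM1 0 ⟨le_refl 0, zero_le_one⟩)
  have hM2_0 : 0 ≤ M2 := le_trans (norm_nonneg _)
    (hM2 0 ⟨le_refl 0, Nat.cast_nonneg K⟩)
  set C : ℝ := (max M1 M2 + 1) * Real.exp (ε / 2 * ((K : ℝ) + 1)) with hC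
  have hC0 : 0 < C := by positivity
  refine ⟨C, hC0, ε / 2, by positivity, fun t ht => ?_⟩
  rcases le_or_gt t (K : ℝ) with htK | htK
  · -- small t: use the compact bound
    have hb : ‖exp (-(t • A))‖ ≤ M2 := hM2 t ⟨ht, htK⟩
    have h1 : (1 : ℝ) ≤ Real.exp (ε / 2 * ((K : ℝ) + 1)) * Real.exp (-(ε / 2 * t)) := by
      rw [← Real.exp_add]
      apply Real.one_le_exp
      nlinarith
    have h2 : M2 ≤ max M1 M2 + 1 := by
      have := le_max_right M1 M2; linarith
    calc ‖exp (-(t • A))‖ ≤ M2 := hb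
      _ ≤ (max M1 M2 + 1) * (Real.exp (ε / 2 * ((K : ℝ) + 1)) * Real.exp (-(ε / 2 * t))) := by
          nlinarith [Real.exp_pos (ε / 2 * ((K : ℝ) + 1)), Real.exp_pos (-(ε / 2 * t))]
      _ = C * Real.exp (-(ε / 2 * t)) := by rw [hC]; ring
  · -- large t
    set k : ℕ := ⌊t⌋₊ with hkdef
    have hkK : K ≤ k := Nat.le_floor htK.le
    have hkle : (k : ℝ) ≤ t := Nat.floor_le ht
    have hklt : t < (k : ℝ) + 1 := Nat.lt_floor_add_one t
    set s : ℝ := t - (k : ℝ) with hsdef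
    have hs0 : 0 ≤ s := by simp [hsdef]; linarith
    have hs1 : s ≤ 1 := by simp [hsdef]; linarith
    have hsplit : -(t • A) = -(s • A) + -((k : ℝ) • A) := by
      rw [← neg_add, ← add_smul]
      congr 2
      simp [hsdef]
    have hcomm : Commute (-(s • A)) (-((k : ℝ) • A)) :=
      ((((Commute.refl A).smul_left s).smul_right ((k : ℝ))).neg_left).neg_right
    have hexp : exp (-(t • A)) = exp (-(s • A)) * x ^ k := by
      rw [hsplit, show exp (-(s • A) + -((k : ℝ) • A)) = exp (-(s • A)) * exp (-((k : ℝ) • A)) from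
        exp_add_of_commute hcomm]
      congr 1
      rw [← smul_neg, Nat.cast_smul_eq_nsmul]; exact NormedSpace.exp_nsmul k (-A)
    have hb1 : ‖exp (-(s • A))‖ ≤ M1 := hM1 s ⟨hs0, hs1⟩
    have hb2 : ‖x ^ k‖ ≤ ρ ^ k := hpow k hkK
    have hρk : ρ ^ k ≤ Real.exp (ε / 2) * Real.exp (-(ε / 2 * t)) := by
      rw [hρdef, ← Real.exp_nat_mul, ← Real.exp_add]
      apply Real.exp_le_exp.mpr
      nlinarith
    have hnorm_mul : ‖exp (-(t • A))‖ ≤ M1 * ρ ^ k := by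
      rw [hexp]
      calc ‖exp (-(s • A)) * x ^ k‖ ≤ ‖exp (-(s • A))‖ * ‖x ^ k‖ := norm_mul_le _ _
        _ ≤ M1 * ρ ^ k := by
            apply mul_le_mul hb1 hb2 (norm_nonneg _) hM1_0
    have hM1C : M1 * Real.exp (ε / 2) ≤ C := by
      rw [hC]
      have h2 : M1 ≤ max M1 M2 + 1 := by
        have := le_max_left M1 M2; linarith
      have h3 : Real.exp (ε / 2) ≤ Real.exp (ε / 2 * ((K : ℝ) + 1)) := by
        apply Real.exp_le_exp.mpr
        have hK1 : (1 : ℝ) ≤ (K : ℝ) + 1 := by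
          have : (0:ℝ) ≤ (K : ℝ) := Nat.cast_nonneg K
          linarith
        nlinarith
      nlinarith [Real.exp_pos (ε / 2), Real.exp_pos (ε / 2 * ((K : ℝ) + 1))]
    calc ‖exp (-(t • A))‖ ≤ M1 * ρ ^ k := hnorm_mul
      _ ≤ M1 * (Real.exp (ε / 2) * Real.exp (-(ε / 2 * t))) := by
          apply mul_le_mul_of_nonneg_left hρk hM1_0
      _ = M1 * Real.exp (ε / 2) * Real.exp (-(ε / 2 * t)) := by ring
      _ ≤ C * Real.exp (-(ε / 2 * t)) :=
          mul_le_mul_of_nonneg_right hM1C (Real.exp_pos _).le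

lemma map_ofReal_exp (M : Matrix (Fin n) (Fin n) ℝ) :
    (exp M).map (Complex.ofReal : ℝ → ℂ) = exp (M.map Complex.ofReal) := by
  have hcont : Continuous ((Complex.ofRealHom.mapMatrix :
      Matrix (Fin n) (Fin n) ℝ →+* Matrix (Fin n) (Fin n) ℂ)) :=
    continuous_id.matrix_map Complex.continuous_ofReal
  have h := map_exp (Complex.ofRealHom.mapMatrix (m := Fin n)) hcont M
  have h2 : (exp (M.map Complex.ofReal) : Matrix (Fin n) (Fin n) ℂ)
      = exp (M.map Complex.ofReal) := by
    rfl
  rw [← h2]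
  exact h

lemma norm_map_ofReal (M : Matrix (Fin n) (Fin n) ℝ) :
    ‖M.map (Complex.ofReal : ℝ → ℂ)‖ = ‖M‖ := by
  rw [Matrix.linfty_opNorm_def, Matrix.linfty_opNorm_def]
  congr 1
  refine Finset.sup_congr rfl fun i _ => ?_
  refine Finset.sum_congr rfl fun j _ => ?_
  simp [Matrix.map_apply]

theorem key (n : ℕ) (V : Matrix (Fin n) (Fin n) ℝ)
    (heig : ∀ μ ∈ spectrum ℂ (V.map (Complex.ofReal : ℝ → ℂ)), 0 < μ.re)
    (α β : Fin n → ℝ) :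
    ∫ τ in Set.Ioi (0:ℝ), α ⬝ᵥ (NormedSpace.exp (-(τ • V))).mulVec β
      = α ⬝ᵥ V⁻¹.mulVec β := by
  classical
  set B : Matrix (Fin n) (Fin n) ℝ := -V with hB
  set A : Matrix (Fin n) (Fin n) ℂ := V.map Complex.ofReal with hA
  have hdetc : A.det = ((V.det : ℂ)) := (RingHom.map_det Complex.ofRealHom V).symm
  have hdet : IsUnit V.det := by
    by_contra h
    have h0 : V.det = 0 := by rwa [isUnit_iff_ne_zero, not_not] at h
    have h00 : (0 : ℂ) ∈ spectrum ℂ A := by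
      rw [spectrum.mem_iff]
      intro hunit
      rw [map_zero, zero_sub, Matrix.isUnit_iff_isUnit_det, Matrix.det_neg, hdetc, h0] at hunit
      simp [isUnit_iff_ne_zero] at hunit
    simpa using heig 0 h00
  let L : Matrix (Fin n) (Fin n) ℝ →ₗ[ℝ] ℝ :=
    { toFun := fun M => α ⬝ᵥ M.mulVec β
      map_add' := fun M N => by
        show α ⬝ᵥ (M + N) *ᵥ β = α ⬝ᵥ M *ᵥ β + α ⬝ᵥ N *ᵥ β
        rw [Matrix.add_mulVec, dotProduct_add]
      map_smul' := fun c M => by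
        show α ⬝ᵥ (c • M) *ᵥ β = (RingHom.id ℝ) c • (α ⬝ᵥ M *ᵥ β)
        rw [Matrix.smul_mulVec, dotProduct_smul, smul_eq_mul, RingHom.id_apply,
          smul_eq_mul] }
  letI : SeminormedAddCommGroup (Matrix (Fin n) (Fin n) ℝ →L[ℝ] ℝ) :=
    ContinuousLinearMap.toSeminormedAddCommGroup
  let Lc : Matrix (Fin n) (Fin n) ℝ →L[ℝ] ℝ := LinearMap.toContinuousLinearMap L
  set f : ℝ → ℝ := fun t => Lc (exp (t • B)) with hf
  have harg : ∀ τ : ℝ, -(τ • V) = τ • B := fun τ => by rw [hB, smul_neg]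
  have hfeq : ∀ τ : ℝ, α ⬝ᵥ (NormedSpace.exp (-(τ • V))).mulVec β = f τ := by
    intro τ
    rw [hf, harg τ]
    rfl
  have hfc : Continuous f :=
    Lc.continuous.comp (exp_continuous.comp (continuous_id.smul continuous_const))
  obtain ⟨C, hC0, ε, hε0, hdecay⟩ := exists_norm_exp_decay A heig
  have hnorm : ∀ t : ℝ, 0 ≤ t → ‖exp (t • B)‖ ≤ C * Real.exp (-(ε * t)) := by
    intro t ht
    have h1 : (exp (t • B)).map Complex.ofReal = exp (-(t • A)) := by
      rw [map_ofReal_exp]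
      congr 1
      ext i j
      simp [hB, hA, Matrix.map_apply, Matrix.neg_apply, Matrix.smul_apply, smul_eq_mul,
        Complex.ofReal_mul, Complex.real_smul]
    calc ‖exp (t • B)‖ = ‖(exp (t • B)).map (Complex.ofReal : ℝ → ℂ)‖ :=
          (norm_map_ofReal _).symm
      _ = ‖exp (-(t • A))‖ := by rw [h1]
      _ ≤ C * Real.exp (-(ε * t)) := hdecay t ht
  have hint : MeasureTheory.IntegrableOn f (Set.Ioi (0:ℝ)) := by
    have hg : MeasureTheory.IntegrableOn (fun t => (‖Lc‖ * C) * Real.exp (-ε * t))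
        (Set.Ioi (0:ℝ)) := (exp_neg_integrableOn_Ioi 0 hε0).const_mul _
    refine MeasureTheory.Integrable.mono' hg hfc.aestronglyMeasurable ?_
    filter_upwards [MeasureTheory.ae_restrict_mem measurableSet_Ioi] with t ht
    have hb := hnorm t ht.le
    calc ‖f t‖ ≤ ‖Lc‖ * ‖exp (t • B)‖ := Lc.le_opNorm _
      _ ≤ ‖Lc‖ * (C * Real.exp (-(ε * t))) :=
          mul_le_mul_of_nonneg_left hb (norm_nonneg _)
      _ = ‖Lc‖ * C * Real.exp (-ε * t) := by ring_nf
  set W : Matrix (Fin n) (Fin n) ℝ := -(V⁻¹) with hW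
  set G : ℝ → ℝ := fun t => Lc (exp (t • B) * W) with hG
  have hderiv : ∀ t : ℝ, HasDerivAt G (f t) t := by
    intro t
    have h1 : HasDerivAt (fun u : ℝ => exp (u • B)) (B * exp (t • B)) t :=
      hasDerivAt_exp_smul_const' B t
    have h2 := h1.mul_const W
    have h3 := Lc.hasFDerivAt.comp_hasDerivAt t h2
    refine h3.congr_deriv (Eq.symm ?_)
    have hc : B * exp (t • B) = exp (t • B) * B :=
      (((Commute.refl B).smul_right t).exp_right).eq
    have hBW : B * W = 1 := by
      rw [hB, hW, neg_mul_neg, Matrix.mul_nonsing_inv V hdet]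
    show Lc (exp (t • B)) = Lc (B * exp (t • B) * W)
    congr 1
    rw [hc, mul_assoc, hBW, mul_one]
  have hFTC : ∀ T : ℝ, ∫ t in (0:ℝ)..T, f t = G T - G 0 := fun T =>
    intervalIntegral.integral_eq_sub_of_hasDerivAt (fun t _ => hderiv t)
      (hfc.intervalIntegrable 0 T)
  have hlim1 := MeasureTheory.intervalIntegral_tendsto_integral_Ioi 0 hint Filter.tendsto_id
  have hGlim : Filter.Tendsto G Filter.atTop (nhds 0) := by
    have hexp0 : Filter.Tendsto (fun T : ℝ => Real.exp (-(ε * T))) Filter.atTop (nhds 0) := by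
      apply Real.tendsto_exp_atBot.comp
      exact Filter.tendsto_neg_atTop_atBot.comp (Filter.tendsto_id.const_mul_atTop hε0)
    apply squeeze_zero_norm' ?_ (by simpa using hexp0.const_mul (‖Lc‖ * ‖W‖ * C))
    filter_upwards [Filter.eventually_ge_atTop (0:ℝ)] with T hT
    calc ‖G T‖ ≤ ‖Lc‖ * ‖exp (T • B) * W‖ := Lc.le_opNorm _
      _ ≤ ‖Lc‖ * (‖exp (T • B)‖ * ‖W‖) :=
          mul_le_mul_of_nonneg_left (norm_mul_le _ _) (norm_nonneg _)
      _ ≤ ‖Lc‖ * ((C * Real.exp (-(ε * T))) * ‖W‖) :=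
          mul_le_mul_of_nonneg_left
            (mul_le_mul_of_nonneg_right (hnorm T hT) (norm_nonneg _)) (norm_nonneg _)
      _ = (‖Lc‖ * ‖W‖ * C) * Real.exp (-(ε * T)) := by ring
  have hlim2 : Filter.Tendsto (fun T => ∫ t in (0:ℝ)..T, f t) Filter.atTop (nhds (0 - G 0)) := by
    simp only [hFTC]
    exact hGlim.sub_const (G 0)
  have huniq := tendsto_nhds_unique hlim1 hlim2
  have hG0 : G 0 = -(α ⬝ᵥ V⁻¹.mulVec β) := by
    rw [hG]
    show Lc (exp ((0:ℝ) • B) * W) = _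
    rw [zero_smul, NormedSpace.exp_zero, Matrix.one_mul]
    show α ⬝ᵥ (-(V⁻¹)).mulVec β = _
    rw [Matrix.neg_mulVec, dotProduct_neg]
  simp_rw [hfeq]
  rw [huniq, hG0]
  ring

end R0Aux

theorem stmt_5 (n : ℕ) (V : Matrix (Fin n) (Fin n) ℝ)
    (heig : ∀ μ ∈ spectrum ℂ (V.map (Complex.ofReal : ℝ → ℂ)), 0 < μ.re)
    (α β : Fin n → ℝ) :
    ∫ τ in Set.Ioi (0:ℝ), α ⬝ᵥ (NormedSpace.exp (-(τ • V))).mulVec β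
      = α ⬝ᵥ V⁻¹.mulVec β :=
  R0Aux.key n V heig α β
end

section
/- The Laplace transform of the SEIR age-of-infection kernel: for s > 0, ∫₀^∞ e^{−sτ} a(τ) dτ = β₁/(b+γ₁+s) + β₂γ₁₂/((b+γ₂+δ+s)(b+γ₁+s)), where a(τ) = α e^{−τV} β with α = (1,0), β = (β₁,β₂)ᵀ and V as in the SEIR model. -/
open Matrix MeasureTheory Set

lemma exp_of_sq_zero (N : Matrix (Fin 2) (Fin 2) ℝ) (hN : N * N = 0) :
    NormedSpace.exp N = 1 + N := by
  rw [NormedSpace.exp_eq_tsum ℝ]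
  show ∑' (n : ℕ), ((n.factorial : ℝ))⁻¹ • N ^ n = 1 + N
  rw [tsum_eq_sum (s := ({0, 1} : Finset ℕ)) ?_]
  · norm_num [Finset.sum_pair]
  · intro n hn
    simp only [Finset.mem_insert, Finset.mem_singleton] at hn
    push_neg at hn
    obtain ⟨m, rfl⟩ : ∃ m, n = m + 2 := ⟨n - 2, by omega⟩
    rw [pow_add, pow_two, hN, mul_zero, smul_zero]

lemma lap1 {k : ℝ} (hk : 0 < k) :
    ∫ τ in Ioi (0:ℝ), Real.exp (-(k * τ)) = 1 / k := by
  have h := integral_comp_mul_left_Ioi (fun x => Real.exp (-x)) 0 hk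
  simp only [mul_zero, smul_eq_mul] at h
  rw [h, integral_exp_neg_Ioi, neg_zero, Real.exp_zero, mul_one, one_div]

lemma gamma2 : ∫ x in Ioi (0:ℝ), x * Real.exp (-x) = 1 := by
  have h := (Real.Gamma_eq_integral (s := 2) (by norm_num)).symm
  have h2 : Real.Gamma 2 = 1 := by
    rw [show (2:ℝ) = (1:ℕ)+1 by norm_num, Real.Gamma_nat_eq_factorial]; norm_num
  calc ∫ x in Ioi (0:ℝ), x * Real.exp (-x)
      = ∫ x in Ioi (0:ℝ), Real.exp (-x) * x ^ ((2:ℝ)-1) := by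
        congr 1; funext x
        norm_num [Real.rpow_one, mul_comm]
    _ = Real.Gamma 2 := h
    _ = 1 := h2

lemma lap2 {k : ℝ} (hk : 0 < k) :
    ∫ τ in Ioi (0:ℝ), τ * Real.exp (-(k * τ)) = 1 / k ^ 2 := by
  have h := integral_comp_mul_left_Ioi (fun x => x * Real.exp (-x)) 0 hk
  simp only [mul_zero, smul_eq_mul] at h
  rw [gamma2, mul_one] at h
  have h3 : ∫ x in Ioi (0:ℝ), k * (x * Real.exp (-(k*x))) = k⁻¹ := by
    rw [← h]; congr 1; funext x; ring
  rw [MeasureTheory.integral_const_mul] at h3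
  have h4 : ∫ τ in Ioi (0:ℝ), τ * Real.exp (-(k*τ)) = k⁻¹ / k := by
    rw [eq_div_iff hk.ne', mul_comm]; exact h3
  rw [h4, sq]; field_simp

lemma int1 {k : ℝ} (hk : 0 < k) :
    IntegrableOn (fun τ => Real.exp (-(k * τ))) (Ioi (0:ℝ)) := by
  simpa [neg_mul] using exp_neg_integrableOn_Ioi 0 hk

lemma int2 {k : ℝ} (hk : 0 < k) :
    IntegrableOn (fun τ => τ * Real.exp (-(k * τ))) (Ioi (0:ℝ)) := by
  have base : IntegrableOn (fun x : ℝ => x * Real.exp (-x)) (Ioi 0) := by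
    have := Real.GammaIntegral_convergent (s := 2) (by norm_num)
    simpa [show (2:ℝ)-1 = 1 by norm_num, Real.rpow_one, mul_comm] using this
  have h := (integrableOn_Ioi_comp_mul_left_iff (fun x => x * Real.exp (-x)) 0 hk).2
    (by simpa using base)
  have h2 := h.const_mul k⁻¹
  have : (fun τ : ℝ => k⁻¹ * ((k * τ) * Real.exp (-(k * τ))))
      = fun τ : ℝ => τ * Real.exp (-(k * τ)) := by
    funext τ
    field_simp
  rwa [this] at h2

lemma exp_diag2 (x y : ℝ) :
    NormedSpace.exp (Matrix.diagonal ![x, y] : Matrix (Fin 2) (Fin 2) ℝ)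
      = !![Real.exp x, 0; 0, Real.exp y] := by
  rw [Matrix.exp_diagonal, Real.exp_eq_exp_ℝ, Pi.exp_def]
  ext i j
  fin_cases i <;> fin_cases j <;> simp [Matrix.diagonal_apply]

theorem stmt_10 (b δ γ₁ γ₂ γ₁₂ β₁ β₂ : ℝ)
    (hb : 0 < b) (hδ : 0 < δ) (hγ₁ : 0 < γ₁) (hγ₂ : 0 < γ₂) (hγ₁₂ : 0 < γ₁₂)
    (hβ₁ : 0 < β₁) (hβ₂ : 0 < β₂) :
    ∀ s > (0:ℝ),
      ∫ τ in Set.Ioi (0:ℝ), Real.exp (-s * τ) *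
        (![1, 0] ⬝ᵥ (NormedSpace.exp
            (-(τ • (!![γ₁ + b, -γ₁₂; 0, γ₂ + b + δ] : Matrix (Fin 2) (Fin 2) ℝ)))).mulVec ![β₁, β₂])
        = β₁ / (b + γ₁ + s) + β₂ * γ₁₂ / ((b + γ₂ + δ + s) * (b + γ₁ + s)) := by
  intro s hs
  set a : ℝ := γ₁ + b with ha
  set d : ℝ := γ₂ + b + δ with hd
  set c : ℝ := γ₁₂ with hc
  have hsa : 0 < s + a := by rw [ha]; linarith
  have hsd : 0 < s + d := by rw [hd]; linarith
  set V : Matrix (Fin 2) (Fin 2) ℝ := !![a, -c; 0, d] with hV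
  have e1 : b + γ₁ + s = s + a := by rw [ha]; ring
  have e2 : b + γ₂ + δ + s = s + d := by rw [hd]; ring
  by_cases had : a = d
  · -- degenerate case
    have key : ∀ τ : ℝ, Real.exp (-s * τ) *
        (![1, 0] ⬝ᵥ (NormedSpace.exp (-(τ • V))).mulVec ![β₁, β₂])
        = β₁ * Real.exp (-((s+a)*τ)) + (β₂ * c) * (τ * Real.exp (-((s+a)*τ))) := by
      intro τ
      have hsplit : -(τ • V) = Matrix.diagonal ![-(a*τ), -(a*τ)]
          + !![0, τ*c; 0, 0] := by
        rw [hV, ← had]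
        ext i j
        fin_cases i <;> fin_cases j <;>
          simp [Matrix.diagonal] <;> ring
      have hN : (!![0, τ*c; 0, 0] : Matrix (Fin 2) (Fin 2) ℝ) * !![0, τ*c; 0, 0] = 0 := by
        ext i j
        fin_cases i <;> fin_cases j <;>
          simp [Matrix.mul_apply, Fin.sum_univ_two]
      have hcomm : Commute (Matrix.diagonal ![-(a*τ), -(a*τ)])
          (!![0, τ*c; 0, 0] : Matrix (Fin 2) (Fin 2) ℝ) := by
        unfold Commute SemiconjBy
        ext i j
        fin_cases i <;> fin_cases j <;>
          simp [Matrix.mul_apply, Fin.sum_univ_two, Matrix.diagonal] <;> ring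
      rw [hsplit, Matrix.exp_add_of_commute _ _ hcomm, exp_of_sq_zero _ hN,
        exp_diag2]
      have hm : Real.exp (-((s+a)*τ)) = Real.exp (-s*τ) * Real.exp (-(a*τ)) := by
        rw [← Real.exp_add]; congr 1; ring
      rw [hm]
      simp [Matrix.mulVec, dotProduct, Fin.sum_univ_two, Matrix.mul_apply,
        Matrix.one_apply, Matrix.add_apply]
      ring
    simp only [key]
    rw [integral_add ((int1 hsa).const_mul β₁) ((int2 hsa).const_mul (β₂*c)),
      integral_const_mul, integral_const_mul, lap1 hsa, lap2 hsa, e1, e2, ← had]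
    field_simp
  · -- distinct eigenvalues
    have hadne : a - d ≠ 0 := sub_ne_zero.mpr had
    set u : ℝ := c / (a - d) with hu
    set P : Matrix (Fin 2) (Fin 2) ℝ := !![1, u; 0, 1] with hP
    set Q : Matrix (Fin 2) (Fin 2) ℝ := !![1, -u; 0, 1] with hQ
    have hPQ : P * Q = 1 := by
      rw [hP, hQ]
      ext i j
      fin_cases i <;> fin_cases j <;>
        simp [Matrix.mul_apply, Fin.sum_univ_two, Matrix.one_apply]
    have hPu : IsUnit P := by
      rw [Matrix.isUnit_iff_isUnit_det, hP, Matrix.det_fin_two_of]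
      norm_num
    have hPinv : P⁻¹ = Q := Matrix.inv_eq_right_inv hPQ
    have key : ∀ τ : ℝ, Real.exp (-s * τ) *
        (![1, 0] ⬝ᵥ (NormedSpace.exp (-(τ • V))).mulVec ![β₁, β₂])
        = (β₁ - u * β₂) * Real.exp (-((s+a)*τ)) + (u * β₂) * Real.exp (-((s+d)*τ)) := by
      intro τ
      have hdiag : (Matrix.diagonal ![-(a*τ), -(d*τ)] : Matrix (Fin 2) (Fin 2) ℝ)
          = !![-(a*τ), 0; 0, -(d*τ)] := by
        ext i j
        fin_cases i <;> fin_cases j <;> simp [Matrix.diagonal_apply]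
      have hconj : -(τ • V) = P * Matrix.diagonal ![-(a*τ), -(d*τ)] * P⁻¹ := by
        rw [hPinv, hdiag, hP, hQ, hV]
        ext i j
        fin_cases i <;> fin_cases j <;>
          (try simp [Matrix.mul_apply, Fin.sum_univ_two, hu]) <;>
          (try field_simp) <;> (try ring)
      rw [hconj, Matrix.exp_conj _ _ hPu, exp_diag2, hPinv]
      have m1 : Real.exp (-((s+a)*τ)) = Real.exp (-s*τ) * Real.exp (-(a*τ)) := by
        rw [← Real.exp_add]; congr 1; ring
      have m2 : Real.exp (-((s+d)*τ)) = Real.exp (-s*τ) * Real.exp (-(d*τ)) := by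
        rw [← Real.exp_add]; congr 1; ring
      rw [m1, m2]
      simp [Matrix.mulVec, dotProduct, Fin.sum_univ_two, Matrix.mul_apply,
        hP, hQ]
      try field_simp
      try ring
    simp only [key]
    rw [integral_add ((int1 hsa).const_mul _) ((int1 hsd).const_mul _),
      integral_const_mul, integral_const_mul, lap1 hsa, lap1 hsd, e1, e2, hu]
    field_simp
    ring
end

section
/- Quasi-positivity implies forward invariance of the nonnegative orthant: if f : ℝⁿ → ℝⁿ is locally Lipschitz and satisfies fᵢ(x) ≥ 0 whenever x ≥ 0 and xᵢ = 0, then any solution of x' = f(x) starting in the nonnegative orthant stays in the nonnegative orthant for all forward times in its interval of existence. -/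
open Set Filter Metric Asymptotics
open scoped Topology NNReal

private lemma pos_lipschitz {n : ℕ} :
    LipschitzWith 1 (fun (y : Fin n → ℝ) (j : Fin n) => max (y j) 0) := by
  apply LipschitzWith.of_dist_le_mul
  intro y z
  simp only [NNReal.coe_one, one_mul]
  rw [dist_pi_le_iff dist_nonneg]
  intro j
  calc dist (max (y j) 0) (max (z j) 0) ≤ dist (y j) (z j) := by
        rw [Real.dist_eq, Real.dist_eq]; exact abs_max_sub_max_le_abs _ _ _
    _ ≤ dist y z := dist_le_pi_dist y z j

private lemma key_local {n : ℕ} (f : (Fin n → ℝ) → (Fin n → ℝ))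
    (hf : LocallyLipschitz f)
    (hquasi : ∀ y, (∀ j, 0 ≤ y j) → ∀ i, y i = 0 → 0 ≤ f y i)
    {T : ℝ} (x : ℝ → Fin n → ℝ)
    (hx : ∀ t ∈ Set.Icc (0:ℝ) T, HasDerivAt x (f (x t)) t)
    {a : ℝ} (ha : a ∈ Set.Ico (0:ℝ) T) (hxa : ∀ j, 0 ≤ x a j) :
    ∃ b ∈ Set.Ioc a T, ∀ s ∈ Set.Icc a b, ∀ j, 0 ≤ x s j := by
  obtain ⟨K, U, hU, hKU⟩ := hf (x a)
  obtain ⟨ε, hε, hball⟩ := Metric.nhds_basis_closedBall.mem_iff.mp hU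
  have hca : ContinuousAt x a := (hx a ⟨ha.1, ha.2.le⟩).continuousAt
  obtain ⟨δ, hδ, hδball⟩ := Metric.continuousAt_iff.mp hca ε hε
  set pos : (Fin n → ℝ) → (Fin n → ℝ) := fun y j => max (y j) 0 with hpos
  set b := min (a + δ / 2) T with hb
  have hab : a < b := lt_min (by linarith) ha.2
  have hbT : b ≤ T := min_le_right _ _
  have hsub : Set.Icc a b ⊆ Set.Icc (0:ℝ) T := fun s hs => ⟨ha.1.trans hs.1, hs.2.trans hbT⟩
  have hposxa : pos (x a) = x a := by
    funext j; exact max_eq_left (hxa j)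
  have hmemx : ∀ s ∈ Set.Icc a b, x s ∈ U := by
    intro s hs
    apply hball
    have : dist s a < δ := by
      rw [Real.dist_eq, abs_of_nonneg (by linarith [hs.1])]
      have : s ≤ a + δ / 2 := hs.2.trans (min_le_left _ _)
      linarith
    exact (hδball this).le
  have hmempos : ∀ s ∈ Set.Icc a b, pos (x s) ∈ U := by
    intro s hs
    apply hball
    have h1 : dist (pos (x s)) (x a) ≤ dist (x s) (x a) := by
      calc dist (pos (x s)) (x a) = dist (pos (x s)) (pos (x a)) := by rw [hposxa]
        _ ≤ 1 * dist (x s) (x a) := pos_lipschitz.dist_le_mul _ _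
        _ = dist (x s) (x a) := one_mul _
    refine le_trans h1 ?_
    have : dist s a < δ := by
      rw [Real.dist_eq, abs_of_nonneg (by linarith [hs.1])]
      have : s ≤ a + δ / 2 := hs.2.trans (min_le_left _ _)
      linarith
    exact (hδball this).le
  set v : ℝ → ℝ := fun s => dist (x s) (pos (x s)) with hv
  have hvnonneg : ∀ s, 0 ≤ v s := fun s => dist_nonneg
  -- componentwise bound: for x s j ≤ 0 the distance of component j is ≤ v s
  have hcomp : ∀ s j, dist (x s j) (max (x s j) 0) ≤ v s := by
    intro s j
    exact dist_le_pi_dist (x s) (pos (x s)) j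
  have hquasibound : ∀ s ∈ Set.Icc a b, ∀ j, x s j ≤ 0 → -((K:ℝ) * v s) ≤ f (x s) j := by
    intro s hs j hj
    have hposnn : ∀ j', 0 ≤ pos (x s) j' := fun j' => le_max_right _ _
    have hzero : pos (x s) j = 0 := max_eq_right hj
    have h1 : 0 ≤ f (pos (x s)) j := hquasi _ hposnn j hzero
    have h2 : dist (f (x s)) (f (pos (x s))) ≤ K * v s :=
      hKU.dist_le_mul _ (hmemx s hs) _ (hmempos s hs)
    have h3 : dist (f (x s) j) (f (pos (x s)) j) ≤ (K:ℝ) * v s :=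
      (dist_le_pi_dist _ _ j).trans h2
    rw [Real.dist_eq, abs_le] at h3
    linarith [h3.1]
  have hcont : ContinuousOn v (Set.Icc a b) := by
    intro s hs
    have h1 : ContinuousAt x s := (hx s (hsub hs)).continuousAt
    have h2 : ContinuousAt (fun t => pos (x t)) s :=
      (pos_lipschitz.continuous.continuousAt).comp h1
    have h3 : ContinuousAt v s := h1.dist h2
    exact h3.continuousWithinAt
  have hslope : ∀ s ∈ Set.Ico a b, ∀ r, (K:ℝ) * v s < r →
      ∃ᶠ z in 𝓝[>] s, (z - s)⁻¹ * (v z - v s) < r := by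
    intro s hs r hr
    have hsIcc : s ∈ Set.Icc a b := ⟨hs.1, hs.2.le⟩
    set c := ((K:ℝ) * v s + r) / 2 with hc
    have hc1 : (K:ℝ) * v s < c := by rw [hc]; linarith
    have hc2 : c < r := by rw [hc]; linarith
    have hc0 : 0 < c :=
      lt_of_le_of_lt (mul_nonneg K.coe_nonneg (hvnonneg s)) hc1
    have he : (0:ℝ) < c - (K:ℝ) * v s := by linarith
    have E1 : ∀ᶠ z in 𝓝[>] s, ∀ j, dist (x z j) (max (x z j) 0) ≤ v s + (z - s) * c := by
      rw [eventually_all]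
      intro j
      by_cases hj : 0 < x s j
      · -- stays positive near s
        have hcj : ContinuousAt (fun t => x t j) s :=
          (continuous_apply j).continuousAt.comp (hx s (hsub hsIcc)).continuousAt
        have hpos' : ∀ᶠ z in 𝓝 s, 0 < x z j := continuousAt_const.eventually_lt hcj hj
        filter_upwards [nhdsWithin_le_nhds hpos', self_mem_nhdsWithin] with z hz hz'
        rw [max_eq_left hz.le, dist_self]
        have : (0:ℝ) ≤ (z - s) * c := mul_nonneg (by simp at hz' ⊢; linarith) hc0.le
        linarith [hvnonneg s]
      · push_neg at hj
        have hd : HasDerivAt (fun t => x t j) (f (x s) j) s := by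
          have h := hx s (hsub hsIcc)
          have h2 := (ContinuousLinearMap.proj (R := ℝ) (φ := fun _ : Fin n => ℝ)
            j).hasFDerivAt.comp_hasDerivAt s h
          exact h2
        have hlo := hasDerivAt_iff_isLittleO.mp hd
        have hev := isLittleO_iff.mp hlo he
        filter_upwards [nhdsWithin_le_nhds hev, self_mem_nhdsWithin] with z hz hz'
        have hzs : s < z := hz'
        rcases le_or_gt 0 (x z j) with hx0 | hx0
        · rw [max_eq_left hx0, dist_self]
          have : (0:ℝ) ≤ (z - s) * c := mul_nonneg (by linarith) hc0.le
          linarith [hvnonneg s]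
        · rw [max_eq_right hx0.le, Real.dist_eq, sub_zero, abs_of_neg hx0]
          have hb1 : ‖x z j - x s j - (z - s) • f (x s) j‖ ≤ (c - (K:ℝ) * v s) * ‖z - s‖ := hz
          rw [Real.norm_eq_abs, Real.norm_eq_abs, smul_eq_mul,
            abs_of_pos (by linarith : (0:ℝ) < z - s)] at hb1
          have hb2 : -(x z j) ≤ -(x s j) - (z - s) * f (x s) j + (c - (K:ℝ) * v s) * (z - s) := by
            have := abs_le.mp hb1
            linarith [this.1]
          have hb3 : -(x s j) ≤ v s := by
            have := hcomp s j
            rwa [max_eq_right hj, Real.dist_eq, sub_zero, abs_of_nonpos hj] at this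
          have hb4 : -(f (x s) j) ≤ (K:ℝ) * v s := by
            have := hquasibound s hsIcc j hj
            linarith
          have hb5 : -((z - s) * f (x s) j) ≤ (z - s) * ((K:ℝ) * v s) := by
            rw [← mul_neg]
            exact mul_le_mul_of_nonneg_left hb4 (by linarith)
          calc -(x z j) ≤ -(x s j) - (z - s) * f (x s) j + (c - (K:ℝ) * v s) * (z - s) := hb2
            _ ≤ v s + (z - s) * ((K:ℝ) * v s) + (c - (K:ℝ) * v s) * (z - s) := by linarith
            _ = v s + (z - s) * c := by ring
    have E2 : ∀ᶠ z in 𝓝[>] s, (z - s)⁻¹ * (v z - v s) < r := by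
      filter_upwards [E1, self_mem_nhdsWithin] with z hz hz'
      have hzs : (0:ℝ) < z - s := by simp at hz'; linarith
      have hvz : v z ≤ v s + (z - s) * c := by
        rw [hv]
        apply dist_pi_le_iff (by positivity)|>.mpr
        intro j
        exact hz j
      calc (z - s)⁻¹ * (v z - v s) ≤ (z - s)⁻¹ * ((z - s) * c) := by
            apply mul_le_mul_of_nonneg_left _ (inv_nonneg.mpr hzs.le)
            linarith
        _ = c := by field_simp
        _ < r := hc2
    exact E2.frequently
  have hbound : ∀ s ∈ Set.Ico a b, (K:ℝ) * v s ≤ (K:ℝ) * v s + 0 := by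
    intro s _; simp
  have hva : v a ≤ 0 := by
    rw [hv]; simp only [hposxa, dist_self]; exact le_refl 0
  have hgron := le_gronwallBound_of_liminf_deriv_right_le (f := v)
    (f' := fun s => (K:ℝ) * v s) hcont hslope hva hbound
  refine ⟨b, ⟨hab, hbT⟩, ?_⟩
  intro s hs j
  have hvs : v s ≤ 0 := by
    have := hgron s hs
    rwa [gronwallBound_ε0_δ0] at this
  have h0 : dist (x s j) (max (x s j) 0) ≤ 0 := (hcomp s j).trans hvs
  have : x s j = max (x s j) 0 := by
    have := le_antisymm h0 dist_nonneg
    exact eq_of_dist_eq_zero this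
  rw [this]
  exact le_max_right _ _

theorem stmt_12 (n : ℕ) (f : (Fin n → ℝ) → (Fin n → ℝ))
    (hf : LocallyLipschitz f)
    (hquasi : ∀ x, (∀ j, 0 ≤ x j) → ∀ i, x i = 0 → 0 ≤ f x i)
    (T : ℝ) (x : ℝ → Fin n → ℝ)
    (hx : ∀ t ∈ Set.Icc (0:ℝ) T, HasDerivAt x (f (x t)) t)
    (hx0 : ∀ j, 0 ≤ x 0 j) :
    ∀ t ∈ Set.Icc (0:ℝ) T, ∀ j, 0 ≤ x t j := by
  set s : Set ℝ := {t | ∀ j, 0 ≤ x t j} with hsdef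
  have hcx : ContinuousOn x (Set.Icc 0 T) := fun t ht => (hx t ht).continuousAt.continuousWithinAt
  have hC : IsClosed {y : Fin n → ℝ | ∀ j, 0 ≤ y j} := by
    have : {y : Fin n → ℝ | ∀ j, 0 ≤ y j} = ⋂ j, {y | 0 ≤ y j} := by
      ext y; simp
    rw [this]
    exact isClosed_iInter fun j => isClosed_le continuous_const (continuous_apply j)
  have hclosed : IsClosed (s ∩ Set.Icc 0 T) := by
    have : s ∩ Set.Icc 0 T = Set.Icc 0 T ∩ x ⁻¹' {y | ∀ j, 0 ≤ y j} := by
      ext t; constructor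
      · rintro ⟨h1, h2⟩; exact ⟨h2, h1⟩
      · rintro ⟨h1, h2⟩; exact ⟨h2, h1⟩
    rw [this]
    exact hcx.preimage_isClosed_of_isClosed isClosed_Icc hC
  have hsubset : Set.Icc (0:ℝ) T ⊆ s := by
    apply hclosed.Icc_subset_of_forall_exists_gt hx0
    rintro t ⟨hts, htIco⟩ y hy
    obtain ⟨b, hbIoc, hball⟩ := key_local f hf hquasi x hx htIco hts
    refine ⟨min b y, ?_, lt_min hbIoc.1 hy, min_le_right _ _⟩
    exact hball (min b y) ⟨le_min hbIoc.1.le hy.le, min_le_left _ _⟩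
  intro t ht j
  exact hsubset ht j
end

section
/- The endemic equilibrium susceptible fraction of the SIR-PH-FA model satisfies s_e = s_dfe / R₀ where R₀ = s_dfe · α V⁻¹ β: if i ≠ 0 is a nonnegative equilibrium of i' = i(s·βαᵀ − V) for a fixed scalar s, then s · (α V⁻¹ β) = 1. -/
open Matrix

theorem stmt_14 (n : ℕ) (α β : Fin n → ℝ) (V : Matrix (Fin n) (Fin n) ℝ)
    (hV : IsUnit V.det) (s : ℝ) (i : Fin n → ℝ) (hi : i ≠ 0)
    (hib : i ⬝ᵥ β ≠ 0)
    (heq : ∀ j, s * (i ⬝ᵥ β) * α j = Vᵀ.mulVec i j) :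
    s * (α ⬝ᵥ V⁻¹.mulVec β) = 1 := by
  have hVT : IsUnit (Vᵀ).det := by simpa using hV
  have h1 : Vᵀ.mulVec i = (s * (i ⬝ᵥ β)) • α := by
    funext j
    simp [← heq j, Pi.smul_apply, smul_eq_mul]
  have h2 : i = (Vᵀ)⁻¹.mulVec ((s * (i ⬝ᵥ β)) • α) := by
    rw [← h1, mulVec_mulVec, nonsing_inv_mul _ hVT, one_mulVec]
  have h3 : i ⬝ᵥ β = (s * (i ⬝ᵥ β)) * ((Vᵀ)⁻¹.mulVec α ⬝ᵥ β) := by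
    conv_lhs => rw [h2]
    rw [mulVec_smul, smul_dotProduct, smul_eq_mul]
  have h4 : (Vᵀ)⁻¹.mulVec α ⬝ᵥ β = α ⬝ᵥ V⁻¹.mulVec β := by
    rw [← transpose_nonsing_inv, ← vecMul_transpose, transpose_transpose,
      ← dotProduct_mulVec]
  rw [h4] at h3
  have key : (i ⬝ᵥ β) * (s * (α ⬝ᵥ V⁻¹.mulVec β)) = (i ⬝ᵥ β) * 1 := by
    rw [mul_one]; linear_combination -h3
  exact mul_left_cancel₀ hib key
end
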